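/- Let S and A be finite nonempty sets, let ρ : S × A → ℝ be nonnegative, fix (s₀, a₀) ∈ S × A, and suppose b := ∑_{a'} ρ(s₀,a') > 0. Then the function g : ℝ → ℝ defined by g(t) = W̄(ρ with the entry at (s₀,a₀) replaced by t) is differentiable at t = ρ(s₀,a₀) with derivative g'(ρ(s₀,a₀)) = 1/2 − ρ(s₀,a₀)/b + (1/2)·∑_{a'} (ρ(s₀,a')/b)². (This is the partial-derivative computation ∂W̄/∂ρ(s,a) used in the proof of Theorem 4.) -/

import Mathlib

open Finset

/-- Causal Tsallis entropy of a state-action visitation measure `ρ : S × A → ℝ`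
(the ratio is `0` when the denominator is `0`, by Lean's division convention). -/
noncomputable def Wbar {S A : Type*} [Fintype S] [Fintype A] (ρ : S × A → ℝ) : ℝ :=
  (1 / 2) * ∑ s, ∑ a, ρ (s, a) * (1 - ρ (s, a) / ∑ a', ρ (s, a'))

/-- The partial derivative `∂W̄/∂ρ(s₀,a₀)` used in the proof of Theorem 4. -/
theorem stmt3 {S A : Type*} [Fintype S] [Fintype A] [Nonempty S] [Nonempty A]
    [DecidableEq S] [DecidableEq A]
    (ρ : S × A → ℝ) (hρ : ∀ p, 0 ≤ ρ p) (s₀ : S) (a₀ : A)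
    (hb : 0 < ∑ a', ρ (s₀, a')) :
    HasDerivAt (fun t => Wbar (Function.update ρ (s₀, a₀) t))
      (1 / 2 - ρ (s₀, a₀) / (∑ a', ρ (s₀, a'))
        + (1 / 2) * ∑ a', (ρ (s₀, a') / ∑ a'', ρ (s₀, a'')) ^ 2)
      (ρ (s₀, a₀)) := by
  set b := ∑ a', ρ (s₀, a') with hbdef
  set t₀ := ρ (s₀, a₀) with ht₀def
  set c := ∑ a' ∈ Finset.univ.erase a₀, ρ (s₀, a') with hcdef
  set q := ∑ a' ∈ Finset.univ.erase a₀, ρ (s₀, a') ^ 2 with hqdef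
  have hbc : t₀ + c = b := by
    rw [ht₀def, hcdef, hbdef]
    exact Finset.add_sum_erase univ (fun a' => ρ (s₀, a')) (mem_univ a₀)
  have hbne : b ≠ 0 := ne_of_gt hb
  have htc : t₀ + c ≠ 0 := hbc ▸ hbne
  set K := ∑ s ∈ Finset.univ.erase s₀, ∑ a, ρ (s, a) * (1 - ρ (s, a) / ∑ a', ρ (s, a'))
    with hKdef
  have hfun : ∀ t, Wbar (Function.update ρ (s₀, a₀) t)
      = (1 / 2) * (K + ((t + c) - (t ^ 2 + q) / (t + c))) := by
    intro t
    rw [Wbar]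
    congr 1
    rw [← Finset.add_sum_erase _ _ (mem_univ s₀)]
    have hrows : ∑ s ∈ Finset.univ.erase s₀,
        ∑ a, (Function.update ρ (s₀, a₀) t) (s, a)
          * (1 - (Function.update ρ (s₀, a₀) t) (s, a)
              / ∑ a', (Function.update ρ (s₀, a₀) t) (s, a')) = K := by
      apply Finset.sum_congr rfl
      intro s hs
      have hsne : s ≠ s₀ := (Finset.mem_erase.mp hs).1
      have hupd : ∀ a : A, (Function.update ρ (s₀, a₀) t) (s, a) = ρ (s, a) := by
        intro a
        exact Function.update_of_ne (by simp [hsne]) _ _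
      simp only [hupd]
    rw [hrows, add_comm K]
    congr 1
    -- row s₀
    have hv : ∀ a : A, (Function.update ρ (s₀, a₀) t) (s₀, a)
        = Function.update (fun a => ρ (s₀, a)) a₀ t a := by
      intro a
      by_cases h : a = a₀
      · subst h; simp
      · rw [Function.update_of_ne (by simp [h]), Function.update_of_ne h]
    set w := Function.update (fun a => ρ (s₀, a)) a₀ t with hwdef
    have hsw : ∑ a, w a = t + c := by
      rw [hwdef, Finset.sum_update_of_mem (mem_univ a₀), Finset.sdiff_singleton_eq_erase, hcdef]
    have hsw2 : ∑ a, (w a) ^ 2 = t ^ 2 + q := by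
      rw [← Finset.add_sum_erase _ _ (mem_univ a₀)]
      congr 1
      · rw [hwdef]; simp
      · apply Finset.sum_congr rfl
        intro a ha
        rw [hwdef, Function.update_of_ne (Finset.mem_erase.mp ha).1]
    simp only [hv, hsw]
    calc ∑ a, w a * (1 - w a / (t + c))
        = ∑ a, (w a - (w a) ^ 2 / (t + c)) := by
          apply Finset.sum_congr rfl; intro a _; ring
      _ = (∑ a, w a) - (∑ a, (w a) ^ 2) / (t + c) := by
          rw [Finset.sum_sub_distrib, Finset.sum_div]
      _ = (t + c) - (t ^ 2 + q) / (t + c) := by rw [hsw, hsw2]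
  have h1 : HasDerivAt (fun t : ℝ => t + c) 1 t₀ := (hasDerivAt_id t₀).add_const c
  have h2 : HasDerivAt (fun t : ℝ => t ^ 2 + q) ((2 : ℕ) * t₀ ^ 1) t₀ :=
    (hasDerivAt_pow 2 t₀).add_const q
  have hdiv := h2.div h1 htc
  have H := ((h1.sub hdiv).const_add K).const_mul (1 / 2 : ℝ)
  have Hfin : HasDerivAt (fun t => Wbar (Function.update ρ (s₀, a₀) t))
      (1 / 2 * (1 - ((2 : ℕ) * t₀ ^ 1 * (t₀ + c) - (t₀ ^ 2 + q) * 1) / (t₀ + c) ^ 2)) t₀ := by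
    simpa only [Pi.sub_apply, Pi.div_apply, ← hfun] using H
  convert Hfin using 1
  have hsq : ∑ a', (ρ (s₀, a') / b) ^ 2 = (t₀ ^ 2 + q) / b ^ 2 := by
    rw [← Finset.add_sum_erase _ (fun a' => (ρ (s₀, a') / b) ^ 2) (mem_univ a₀)]
    simp only [div_pow]
    rw [← Finset.sum_div, hqdef, add_div]
  rw [hsq, hbc]
  push_cast
  field_simp
  ring
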